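/- Let G = (V,E) be a finite connected simple graph and let v0 be a fixed vertex. The number of acyclic v0-connected orientations of G equals Σ_{S ⊆ E, (V,S) connected} (−1)^{|S| + 1 − |V|}, the sum being over the connected spanning subgraphs of G. (This sum is the Tutte polynomial evaluation T_G(1,0) via the subgraph expansion.) -/

import Mathlib

/-- An orientation of a simple graph: a choice of direction for each edge. -/
structure GraphOrientation {V : Type*} (G : SimpleGraph V) where
  dir : V → V → Prop
  adj_of_dir : ∀ u v, dir u v → G.Adj u v
  dir_iff_not : ∀ u v, G.Adj u v → (dir u v ↔ ¬ dir v u)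

namespace GraphOrientation

variable {V : Type*} {G : SimpleGraph V}

/-- The outdegree of a vertex: the number of edges directed away from it. -/
noncomputable def outDegree (O : GraphOrientation G) (v : V) : ℕ :=
  {u | O.dir v u}.ncard

/-- `v` is reachable from `u` by a directed path. -/
def Reaches (O : GraphOrientation G) : V → V → Prop :=
  Relation.ReflTransGen O.dir

/-- `C` is the edge set of a directed cycle of the orientation. -/
def IsDirCycle (O : GraphOrientation G) (C : Set (Sym2 V)) : Prop :=
  ∃ (v : V) (w : G.Walk v v), w.IsCycle ∧
    (∀ d ∈ w.darts, O.dir d.toProd.1 d.toProd.2) ∧ C = {e | e ∈ w.edges}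

/-- The orientation is strongly connected. -/
def IsStronglyConnected (O : GraphOrientation G) : Prop := ∀ u v, O.Reaches u v

/-- Every vertex is reachable from `v0`. -/
def IsConnectedFrom (O : GraphOrientation G) (v0 : V) : Prop := ∀ v, O.Reaches v0 v

/-- The set of edges on which two orientations differ. -/
def diffSet (O O' : GraphOrientation G) : Set (Sym2 V) :=
  {e | ∃ a b, e = s(a, b) ∧ O.dir a b ∧ O'.dir b a}

/-- `O'` is obtained from `O` by reversing exactly the edges of `A`. -/
def IsFlipOn (O O' : GraphOrientation G) (A : Set (Sym2 V)) : Prop :=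
  (∀ u v, s(u, v) ∈ A → (O'.dir u v ↔ O.dir v u)) ∧
    (∀ u v, s(u, v) ∉ A → (O'.dir u v ↔ O.dir u v))

/-- One cycle-flip step. -/
def CycleFlip (O O' : GraphOrientation G) : Prop :=
  ∃ C, O.IsDirCycle C ∧ O.IsFlipOn O' C

end GraphOrientation

/-- The cut defined by a vertex subset `U`: edges with exactly one endpoint in `U`. -/
def SimpleGraph.cutSet {V : Type*} (G : SimpleGraph V) (U : Set V) : Set (Sym2 V) :=
  {e | ∃ a b, e = s(a, b) ∧ G.Adj a b ∧ a ∈ U ∧ b ∉ U}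

/-- A cocycle: a minimal nonempty cut. -/
def SimpleGraph.IsCocycle {V : Type*} (G : SimpleGraph V) (D : Set (Sym2 V)) : Prop :=
  D.Nonempty ∧ (∃ U : Set V, D = G.cutSet U) ∧
    ∀ D' : Set (Sym2 V), D'.Nonempty → (∃ U : Set V, D' = G.cutSet U) → D' ⊆ D → D' = D

/-- A directed cocycle: a cocycle all of whose edges are directed toward the same side. -/
def GraphOrientation.IsDirCocycle {V : Type*} {G : SimpleGraph V}
    (O : GraphOrientation G) (D : Set (Sym2 V)) : Prop :=
  G.IsCocycle D ∧ ∃ U : Set V, D = G.cutSet U ∧ ∀ a b, O.dir a b → s(a, b) ∈ D → b ∈ U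

/-- The excess of a subset of vertices with respect to `δ : V → ℕ`. -/
noncomputable def SimpleGraph.excess {V : Type*} (G : SimpleGraph V) (δ : V → ℕ)
    (U : Finset V) : ℤ :=
  (∑ u ∈ U, (δ u : ℤ)) - ({e | e ∈ G.edgeSet ∧ ∀ x ∈ e, x ∈ U} : Set (Sym2 V)).ncard

/-- `C` is the edge set of a cycle of `G`. -/
def SimpleGraph.IsCycleEdgeSet {V : Type*} (G : SimpleGraph V) (C : Set (Sym2 V)) : Prop :=
  ∃ (v : V) (w : G.Walk v v), w.IsCycle ∧ C = {e | e ∈ w.edges}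

/-- The number of connected components of the spanning subgraph `(V, S)`. -/
noncomputable def numComponents (V : Type*) (S : Set (Sym2 V)) : ℕ :=
  Nat.card (SimpleGraph.fromEdgeSet S).ConnectedComponent


/-! ### Auxiliary machinery -/

namespace St18

open Relation

section RelLemmas

variable {α β : Type*} {r s : α → α → Prop} {r' : β → β → Prop} {f : α → β}

lemma rtg_map_stay (h : ∀ a b, r a b → r' (f a) (f b) ∨ f a = f b) :
    ∀ {a b}, ReflTransGen r a b → ReflTransGen r' (f a) (f b) := by
  intro a b hab
  induction hab with
  | refl => exact .refl
  | tail _ hstep ih =>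
    rcases h _ _ hstep with h' | h'
    · exact ih.tail h'
    · rwa [← h']

lemma stay_eq : ∀ {a b}, TransGen (fun x y => r x y ∧ f x = f y) a b → f a = f b := by
  intro a b hab
  induction hab with
  | single hs => exact hs.2
  | tail _ hstep ih => exact ih.trans hstep.2

lemma tg_map_stay (h : ∀ a b, r a b → r' (f a) (f b) ∨ f a = f b) :
    ∀ {a b}, TransGen r a b →
      TransGen r' (f a) (f b) ∨ TransGen (fun x y => r x y ∧ f x = f y) a b := by
  intro a b hab
  induction hab with
  | single hs =>
    rcases h _ _ hs with h' | h'
    · exact Or.inl (.single h')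
    · exact Or.inr (.single ⟨hs, h'⟩)
  | tail _ hstep ih =>
    rcases h _ _ hstep with h' | h'
    · rcases ih with ih | ih
      · exact Or.inl (ih.tail h')
      · exact Or.inl (stay_eq ih ▸ TransGen.single h')
    · rcases ih with ih | ih
      · exact Or.inl (h' ▸ ih)
      · exact Or.inr (ih.tail ⟨hstep, h'⟩)

/-- Decompose a path for `s` (which is `r` plus one extra pair `(p,q)`) at the last
use of the extra pair. -/
lemma rtg_union_single {p q : α}
    (hsub : ∀ {x y}, s x y → r x y ∨ (x = p ∧ y = q)) :
    ∀ {a b}, ReflTransGen s a b →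
      ReflTransGen r a b ∨ (ReflTransGen r q b ∧ ReflTransGen s a p) := by
  intro a b hab
  induction hab with
  | refl => exact Or.inl .refl
  | tail _ hstep ih =>
    rcases hsub hstep with h' | ⟨h1, h2⟩
    · rcases ih with ih | ⟨ih1, ih2⟩
      · exact Or.inl (ih.tail h')
      · exact Or.inr ⟨ih1.tail h', ih2⟩
    · subst h1; subst h2
      rename_i hac
      exact Or.inr ⟨.refl, hac⟩

lemma tg_union_single {p q : α}
    (hsub : ∀ {x y}, s x y → r x y ∨ (x = p ∧ y = q)) :
    ∀ {a b}, TransGen s a b →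
      TransGen r a b ∨ (ReflTransGen r q b ∧ ReflTransGen s a p) := by
  intro a b hab
  induction hab with
  | single hs =>
    rcases hsub hs with h' | ⟨h1, h2⟩
    · exact Or.inl (.single h')
    · subst h1; subst h2; exact Or.inr ⟨.refl, .refl⟩
  | tail hac hstep ih =>
    rcases hsub hstep with h' | ⟨h1, h2⟩
    · rcases ih with ih | ⟨ih1, ih2⟩
      · exact Or.inl (ih.tail h')
      · exact Or.inr ⟨ih1.tail h', ih2⟩
    · subst h1; subst h2
      exact Or.inr ⟨.refl, hac.to_reflTransGen⟩

/-- If there is an `s`-cycle then either there is an `r`-cycle or `q` reaches `p` via `r`,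
where `s` is `r` plus the extra pair `(p,q)`. -/
lemma tg_closed_union_single {p q a : α}
    (hsub : ∀ {x y}, s x y → r x y ∨ (x = p ∧ y = q))
    (h : TransGen s a a) :
    (∃ x, TransGen r x x) ∨ ReflTransGen r q p := by
  rcases tg_union_single hsub h with h' | ⟨h1, h2⟩
  · exact Or.inl ⟨a, h'⟩
  · rcases rtg_union_single hsub h2 with h3 | ⟨h3, _⟩
    · exact Or.inr (h1.trans h3)
    · exact Or.inr h3

lemma rtg_avoid {p : α} :
    ∀ {a b}, ReflTransGen s a b → a ≠ p → b ≠ p →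
      ReflTransGen (fun x y => s x y ∧ x ≠ p ∧ y ≠ p) a b ∨
        (ReflTransGen s a p ∧ ReflTransGen s p b) := by
  intro a b hab
  induction hab with
  | refl => intro _ _; exact Or.inl .refl
  | @tail c b hac hstep ih =>
    intro ha hb
    by_cases hc : c = p
    · subst hc
      exact Or.inr ⟨hac, ReflTransGen.single hstep⟩
    · rcases ih ha hc with ih | ⟨ih1, ih2⟩
      · exact Or.inl (ih.tail ⟨hstep, hc, hb⟩)
      · exact Or.inr ⟨ih1, ih2.tail hstep⟩

/-- An `s`-cycle either avoids `p` entirely or there is an `s`-cycle at `p`. -/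
lemma tg_closed_avoid {p x : α} (h : TransGen s x x) :
    TransGen (fun a b => s a b ∧ a ≠ p ∧ b ≠ p) x x ∨ TransGen s p p := by
  by_cases hx : x = p
  · exact Or.inr (hx ▸ h)
  rcases TransGen.tail'_iff.mp h with ⟨c, hxc, hcx⟩
  by_cases hc : c = p
  · subst hc
    exact Or.inr (TransGen.head' hcx hxc)
  · rcases rtg_avoid hxc hx hc with h' | ⟨h1, h2⟩
    · exact Or.inl (TransGen.tail' h' ⟨hcx, hc, hx⟩)
    · exact Or.inr (Relation.TransGen.trans_left (TransGen.tail' h2 hcx) h1)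

lemma rtg_first_return {p : α} :
    ∀ {c}, ReflTransGen s c p → c ≠ p →
      ∃ d, ReflTransGen (fun x y => s x y ∧ x ≠ p ∧ y ≠ p) c d ∧ s d p := by
  intro c hcp
  induction hcp using ReflTransGen.head_induction_on with
  | refl => intro h; exact absurd rfl h
  | @head c m hcm hmp ih =>
    intro hc
    by_cases hm : m = p
    · subst hm
      exact ⟨c, .refl, hcm⟩
    · rcases ih hm with ⟨d, hd1, hd2⟩
      exact ⟨d, ReflTransGen.head ⟨hcm, hc, hm⟩ hd1, hd2⟩

/-- First-return decomposition of a cycle at `p`. -/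
lemma tg_closed_at {p : α} (h : TransGen s p p) (hnl : ¬ s p p) :
    ∃ c d, s p c ∧ ReflTransGen (fun x y => s x y ∧ x ≠ p ∧ y ≠ p) c d ∧ s d p := by
  rcases (Relation.TransGen.head'_iff.mp h) with ⟨c, hpc, hcp⟩
  have hc : c ≠ p := fun hc => hnl (hc ▸ hpc)
  rcases rtg_first_return hcp hc with ⟨d, hd1, hd2⟩
  exact ⟨c, d, hpc, hd1, hd2⟩

end RelLemmas

end St18


namespace St18

open Relation

section OrientBasic

variable {V : Type*} {G : SimpleGraph V}

lemma dir_asymm (O : GraphOrientation G) {a b : V} (h : O.dir a b) : ¬ O.dir b a :=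
  (O.dir_iff_not a b (O.adj_of_dir a b h)).mp h

lemma not_dir_self (O : GraphOrientation G) (a : V) : ¬ O.dir a a :=
  fun h => G.loopless.irrefl a (O.adj_of_dir a a h)

lemma orient_ext {O O' : GraphOrientation G} (h : ∀ a b, O.dir a b ↔ O'.dir a b) : O = O' := by
  cases O; cases O'
  simp only [GraphOrientation.mk.injEq]
  funext a b
  exact propext (h a b)

lemma orient_finite [Finite V] : Finite (GraphOrientation G) := by
  have : Finite (Set (V × V)) := by infer_instance
  apply Finite.of_injective (fun O : GraphOrientation G => {p : V × V | O.dir p.1 p.2})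
  intro O O' h
  apply orient_ext
  intro a b
  constructor
  · intro hd; exact (Set.ext_iff.mp h (a, b)).mp hd
  · intro hd; exact (Set.ext_iff.mp h (a, b)).mpr hd

lemma rtg_of_dirWalk (O : GraphOrientation G) :
    ∀ {a b : V} (w : G.Walk a b), (∀ d ∈ w.darts, O.dir d.toProd.1 d.toProd.2) →
      ReflTransGen O.dir a b := by
  intro a b w
  induction w with
  | nil => intro _; exact .refl
  | @cons x y z h p ih =>
    intro hd
    refine ReflTransGen.head ?_ (ih fun d hdm => hd d (by simp [SimpleGraph.Walk.darts_cons, hdm]))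
    exact hd ⟨(x, y), h⟩ (by simp [SimpleGraph.Walk.darts_cons])

lemma transGen_of_dirWalk (O : GraphOrientation G) :
    ∀ {a b : V} (w : G.Walk a b), 0 < w.length →
      (∀ d ∈ w.darts, O.dir d.toProd.1 d.toProd.2) → TransGen O.dir a b := by
  intro a b w
  cases w with
  | nil => intro h; simp at h
  | cons h p =>
    intro _ hd
    refine TransGen.head' (hd ⟨(_, _), h⟩ (by simp [SimpleGraph.Walk.darts_cons])) ?_
    exact rtg_of_dirWalk O p fun d hdm => hd d (by simp [SimpleGraph.Walk.darts_cons, hdm])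

lemma exists_dirWalk_of_transGen (O : GraphOrientation G) {a b : V}
    (h : TransGen O.dir a b) :
    ∃ w : G.Walk a b, 0 < w.length ∧ ∀ d ∈ w.darts, O.dir d.toProd.1 d.toProd.2 := by
  induction h with
  | @single c hc =>
    refine ⟨SimpleGraph.Walk.cons (O.adj_of_dir _ _ hc) .nil, by simp, ?_⟩
    intro d hd
    simp only [SimpleGraph.Walk.darts_cons, SimpleGraph.Walk.darts_nil, List.mem_singleton,
      List.mem_cons, List.not_mem_nil, or_false] at hd
    subst hd
    exact hc
  | @tail c d hac hcd ih =>
    rcases ih with ⟨w, hpos, hd⟩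
    refine ⟨w.append (SimpleGraph.Walk.cons (O.adj_of_dir _ _ hcd) .nil), by
      simp [SimpleGraph.Walk.length_append], ?_⟩
    intro dt hdt
    rw [SimpleGraph.Walk.darts_append] at hdt
    rcases List.mem_append.mp hdt with h' | h'
    · exact hd dt h'
    · simp only [SimpleGraph.Walk.darts_cons, SimpleGraph.Walk.darts_nil,
        List.mem_cons, List.not_mem_nil, or_false] at h'
      subst h'; exact hcd

lemma isCycle_of_dir_tail_nodup (O : GraphOrientation G) {y : V} (w : G.Walk y y)
    (hpos : 0 < w.length) (hd : ∀ d ∈ w.darts, O.dir d.toProd.1 d.toProd.2)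
    (hnd : w.support.tail.Nodup) : w.IsCycle := by
  have hdarts : w.darts.Nodup := by
    have := w.map_snd_darts ▸ hnd
    exact List.Nodup.of_map _ this
  refine SimpleGraph.Walk.IsCycle.mk ⟨⟨?_⟩, ?_⟩ hnd
  · -- edges nodup
    refine List.Nodup.map_on ?_ hdarts
    intro d1 h1 d2 h2 he
    have hd1 := hd d1 h1
    have hd2 := hd d2 h2
    have : s(d1.toProd.1, d1.toProd.2) = s(d2.toProd.1, d2.toProd.2) := he
    rw [Sym2.eq_iff] at this
    rcases this with ⟨ha, hb⟩ | ⟨ha, hb⟩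
    · cases d1; cases d2
      simp only [SimpleGraph.Dart.mk.injEq, Prod.ext_iff]
      exact ⟨ha, hb⟩
    · exfalso
      rw [ha, hb] at hd1
      exact dir_asymm O hd2 hd1
  · intro hn
    rw [hn] at hpos
    simp at hpos

lemma isDirCycle_of_closed (O : GraphOrientation G) :
    ∀ (n : ℕ) {y : V} (w : G.Walk y y), w.length = n → 0 < w.length →
      (∀ d ∈ w.darts, O.dir d.toProd.1 d.toProd.2) → ∃ C, O.IsDirCycle C := by
  intro n
  induction n using Nat.strong_induction_on with
  | _ n ih =>
    intro y w hlen hpos hd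
    classical
    by_cases hnd : w.support.tail.Nodup
    · exact ⟨{e | e ∈ w.edges}, y, w, isCycle_of_dir_tail_nodup O w hpos hd hnd, hd, rfl⟩
    · obtain ⟨z, hz⟩ := List.exists_duplicate_iff_not_nodup.mpr hnd
      have hzc : 2 ≤ w.support.tail.count z := List.duplicate_iff_two_le_count.mp hz
      have hzs : z ∈ w.support := List.mem_of_mem_tail (List.duplicate_iff_two_le_count.mpr hzc).mem
      set w' := w.rotate _ hzs with hw'
      have hdartsperm : w'.darts.Perm w.darts := (w.rotate_darts _ hzs).perm
      have hd' : ∀ d ∈ w'.darts, O.dir d.toProd.1 d.toProd.2 :=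
        fun d hdm => hd d (hdartsperm.mem_iff.mp hdm)
      have hlen' : w'.length = w.length := by
        have h1 : w'.darts.length = w.darts.length := hdartsperm.length_eq
        rwa [SimpleGraph.Walk.length_darts, SimpleGraph.Walk.length_darts] at h1
      have hcount' : 2 ≤ w'.support.tail.count z := by
        have h1 : w'.support.tail.Perm w.support.tail := (w.support_rotate _ hzs).perm
        rwa [h1.count_eq]
      cases hw2 : w' with
      | nil =>
        rw [hw2] at hlen'
        simp at hlen'
        omega
      | @cons _ m _ hadj q =>
        rw [hw2] at hcount' hd' hlen'
        simp only [SimpleGraph.Walk.support_cons, List.tail_cons] at hcount'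
        have hzq : z ∈ q.support := by
          have : 0 < q.support.count z := by omega
          exact List.count_pos_iff.mp this
        set q2 := q.dropUntil z hzq with hq2
        have hd2 : ∀ d ∈ q2.darts, O.dir d.toProd.1 d.toProd.2 := by
          intro d hdm
          refine hd' d ?_
          rw [SimpleGraph.Walk.darts_cons]
          exact List.mem_cons_of_mem _ (q.darts_dropUntil_subset hzq hdm)
        have hlq2 : q2.length < n := by
          have h1 : q2.length ≤ q.length := q.length_dropUntil_le hzq
          have h2 : q.length + 1 = n := by
            rw [← hlen, ← hlen']
            simp [SimpleGraph.Walk.length_cons]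
          omega
        have hposq2 : 0 < q2.length := by
          by_contra h0
          push_neg at h0
          have h0' : q2.length = 0 := Nat.le_zero.mp h0
          · have hspec := q.take_spec hzq
            have hsup : q.support = (q.takeUntil z hzq).support ++ q2.support.tail := by
              rw [← SimpleGraph.Walk.support_append, hspec]
            have hc1 : (q.takeUntil z hzq).support.count z = 1 :=
              q.count_support_takeUntil_eq_one hzq
            have hq2sup : q2.support.tail.length = 0 := by
              have h1 := q2.length_support
              have h2 : q2.support.tail.length = q2.support.length - 1 := by
                simp [List.length_tail]
              omega
            have : q2.support.tail = [] := List.eq_nil_of_length_eq_zero hq2sup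
            rw [hsup, List.count_append, hc1, this] at hcount'
            simp at hcount'
        exact ih q2.length hlq2 q2 rfl hposq2 hd2

lemma hasDirCycle_iff (O : GraphOrientation G) :
    (∃ C, O.IsDirCycle C) ↔ ∃ x, TransGen O.dir x x := by
  constructor
  · rintro ⟨C, y, w, hcyc, hd, rfl⟩
    refine ⟨y, transGen_of_dirWalk O w ?_ hd⟩
    have := hcyc.three_le_length
    omega
  · rintro ⟨x, hx⟩
    rcases exists_dirWalk_of_transGen O hx with ⟨w, hpos, hd⟩
    exact isDirCycle_of_closed O w.length w rfl hpos hd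

end OrientBasic

end St18


namespace St18

open Relation SimpleGraph

section Contract

variable {V : Type*} [DecidableEq V] {v0 u : V}

/-- The contraction map identifying `u` with `v0`. -/
def cproj (hvu : v0 ≠ u) : V → {x : V // x ≠ u} :=
  fun x => if h : x = u then ⟨v0, hvu⟩ else ⟨x, h⟩

lemma cproj_val (hvu : v0 ≠ u) (x' : {x : V // x ≠ u}) : cproj hvu x'.val = x' := by
  simp only [cproj, x'.prop, dif_neg, not_false_iff]

lemma cproj_v0 (hvu : v0 ≠ u) : cproj hvu v0 = ⟨v0, hvu⟩ := by
  rw [cproj, dif_neg hvu]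

lemma cproj_u (hvu : v0 ≠ u) : cproj hvu u = ⟨v0, hvu⟩ := by
  simp [cproj]

lemma cproj_eq_val (hvu : v0 ≠ u) {x : V} {x' : {x : V // x ≠ u}}
    (hx : cproj hvu x = x') (hx' : x' ≠ ⟨v0, hvu⟩) : x = x'.val := by
  by_cases h : x = u
  · subst h
    exact absurd ((cproj_u hvu).symm.trans hx) (fun hc => hx' hc.symm)
  · rw [cproj, dif_neg h] at hx
    exact (congrArg Subtype.val hx.symm).symm

lemma cproj_eq_vb (hvu : v0 ≠ u) {x : V} (hx : cproj hvu x = ⟨v0, hvu⟩) :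
    x = v0 ∨ x = u := by
  by_cases h : x = u
  · exact Or.inr h
  · rw [cproj, dif_neg h] at hx
    exact Or.inl (congrArg Subtype.val hx)

lemma cproj_eq_cproj (hvu : v0 ≠ u) {x y : V} (h : cproj hvu x = cproj hvu y) :
    x = y ∨ ((x = v0 ∨ x = u) ∧ (y = v0 ∨ y = u)) := by
  by_cases hx : x = u <;> by_cases hy : y = u
  · exact Or.inl (hx.trans hy.symm)
  · rw [cproj, dif_pos hx, cproj, dif_neg hy] at h
    have := congrArg Subtype.val h
    exact Or.inr ⟨Or.inr hx, Or.inl this.symm⟩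
  · rw [cproj, dif_neg hx, cproj, dif_pos hy] at h
    have := congrArg Subtype.val h
    exact Or.inr ⟨Or.inl this, Or.inr hy⟩
  · rw [cproj, dif_neg hx, cproj, dif_neg hy] at h
    exact Or.inl (congrArg Subtype.val h)

lemma edge_eq_iff {x y : V} : s(x, y) = s(v0, u) ↔ (x = v0 ∧ y = u) ∨ (x = u ∧ y = v0) :=
  Sym2.eq_iff

lemma cproj_ne (hvu : v0 ≠ u) {x y : V} (hxy : x ≠ y) (he : s(x, y) ≠ s(v0, u)) :
    cproj hvu x ≠ cproj hvu y := by
  intro h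
  rcases cproj_eq_cproj hvu h with h' | ⟨hx, hy⟩
  · exact hxy h'
  · rcases hx with hx | hx <;> rcases hy with hy | hy
    · exact hxy (hx.trans hy.symm)
    · exact he (by rw [hx, hy])
    · exact he (by rw [hx, hy, Sym2.eq_swap])
    · exact hxy (hx.trans hy.symm)

lemma cproj_surjective (hvu : v0 ≠ u) : Function.Surjective (cproj hvu) :=
  fun x' => ⟨x'.val, cproj_val hvu x'⟩

/-- Reachability lifts from the contracted structure back to the original one. -/
lemma lift_reach (hvu : v0 ≠ u) {r : V → V → Prop}
    {r' : {x : V // x ≠ u} → {x : V // x ≠ u} → Prop}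
    (H1 : ∀ a' b', r' a' b' → ∃ a b, cproj hvu a = a' ∧ cproj hvu b = b' ∧ r a b)
    (H2 : ReflTransGen r v0 u) :
    ∀ {x'}, ReflTransGen r' ⟨v0, hvu⟩ x' → ∀ x, cproj hvu x = x' → ReflTransGen r v0 x := by
  have base : ∀ x : V, cproj hvu x = ⟨v0, hvu⟩ → ReflTransGen r v0 x := by
    intro x hx
    rcases cproj_eq_vb hvu hx with h | h
    · exact h ▸ .refl
    · exact h ▸ H2
  intro x' hx'
  induction hx' with
  | refl => exact base
  | @tail c' x' hc' hstep ih =>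
    obtain ⟨a, b, ha, hb, hab⟩ := H1 _ _ hstep
    have hrb : ReflTransGen r v0 b := (ih a ha).tail hab
    intro x hx
    by_cases hx'v : x' = ⟨v0, hvu⟩
    · exact base x (hx.trans hx'v)
    · have h1 : x = x'.val := cproj_eq_val hvu hx hx'v
      have h2 : b = x'.val := cproj_eq_val hvu hb hx'v
      rw [h1, ← h2]
      exact hrb

/-- The contracted graph. -/
def cGraph (G : SimpleGraph V) (hvu : v0 ≠ u) : SimpleGraph {x : V // x ≠ u} :=
  SimpleGraph.fromEdgeSet (Sym2.map (cproj hvu) '' (G.edgeSet \ {s(v0, u)}))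

lemma cGraph_adj {G : SimpleGraph V} (hvu : v0 ≠ u) {a b : V}
    (hab : G.Adj a b) (he : s(a, b) ≠ s(v0, u)) :
    (cGraph G hvu).Adj (cproj hvu a) (cproj hvu b) := by
  rw [cGraph, fromEdgeSet_adj]
  refine ⟨⟨s(a, b), ⟨hab, he⟩, ?_⟩, cproj_ne hvu hab.ne he⟩
  simp [Sym2.map_pair_eq]

lemma cGraph_adj_elim {G : SimpleGraph V} (hvu : v0 ≠ u)
    {a' b' : {x : V // x ≠ u}} (h : (cGraph G hvu).Adj a' b') :
    ∃ a b, cproj hvu a = a' ∧ cproj hvu b = b' ∧ G.Adj a b ∧ s(a, b) ≠ s(v0, u) := by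
  rw [cGraph, fromEdgeSet_adj] at h
  obtain ⟨⟨f, ⟨hf1, hf2⟩, hf3⟩, hne⟩ := h
  induction f with
  | _ a b =>
    rw [Sym2.map_pair_eq, Sym2.eq_iff] at hf3
    rw [Set.mem_singleton_iff] at hf2
    rcases hf3 with ⟨h1, h2⟩ | ⟨h1, h2⟩
    · exact ⟨a, b, h1, h2, (SimpleGraph.mem_edgeSet _).mp hf1, hf2⟩
    · exact ⟨b, a, h2, h1, ((SimpleGraph.mem_edgeSet _).mp hf1).symm, fun hc => hf2 (Sym2.eq_swap.trans hc)⟩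

lemma cGraph_connected {G : SimpleGraph V} (hvu : v0 ≠ u) (hG : G.Connected) :
    (cGraph G hvu).Connected := by
  rw [connected_iff_exists_forall_reachable]
  refine ⟨⟨v0, hvu⟩, fun x' => ?_⟩
  have hr : G.Reachable v0 x'.val := hG.preconnected v0 x'.val
  rw [reachable_iff_reflTransGen] at hr
  rw [reachable_iff_reflTransGen]
  have := rtg_map_stay (f := cproj hvu) (r := G.Adj) (r' := (cGraph G hvu).Adj) ?_ hr
  · rwa [cproj_v0, cproj_val] at this
  · intro a b hab
    by_cases he : s(a, b) = s(v0, u)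
    · rcases edge_eq_iff.mp he with ⟨h1, h2⟩ | ⟨h1, h2⟩
      · subst h1; subst h2; exact Or.inr (by rw [cproj_v0, cproj_u])
      · subst h1; subst h2; exact Or.inr (by rw [cproj_v0, cproj_u])
    · exact Or.inl (cGraph_adj hvu hab he)

/-- Connectivity of a spanning subgraph projects to the contraction. -/
lemma fromEdgeSet_conn_proj {G : SimpleGraph V} (hvu : v0 ≠ u) {S : Set (Sym2 V)}
    (hS : S ⊆ G.edgeSet) (hconn : (SimpleGraph.fromEdgeSet S).Connected) :
    (SimpleGraph.fromEdgeSet (Sym2.map (cproj hvu) '' (S \ {s(v0, u)}))).Connected := by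
  rw [connected_iff_exists_forall_reachable]
  refine ⟨⟨v0, hvu⟩, fun x' => ?_⟩
  have hr : (fromEdgeSet S).Reachable v0 x'.val := hconn.preconnected v0 x'.val
  rw [reachable_iff_reflTransGen] at hr
  rw [reachable_iff_reflTransGen]
  have := rtg_map_stay (f := cproj hvu) (r := (fromEdgeSet S).Adj)
    (r' := (fromEdgeSet (Sym2.map (cproj hvu) '' (S \ {s(v0, u)}))).Adj) ?_ hr
  · rwa [cproj_v0, cproj_val] at this
  · intro a b hab
    rw [fromEdgeSet_adj] at hab
    obtain ⟨hmem, hne⟩ := hab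
    by_cases he : s(a, b) = s(v0, u)
    · rcases edge_eq_iff.mp he with ⟨h1, h2⟩ | ⟨h1, h2⟩
      · subst h1; subst h2; exact Or.inr (by rw [cproj_v0, cproj_u])
      · subst h1; subst h2; exact Or.inr (by rw [cproj_v0, cproj_u])
    · refine Or.inl ?_
      rw [fromEdgeSet_adj]
      exact ⟨⟨s(a, b), ⟨hmem, he⟩, by simp [Sym2.map_pair_eq]⟩, cproj_ne hvu hne he⟩

/-- Connectivity of a spanning subgraph lifts from the contraction, provided the
contracted edge belongs to the subgraph. -/
lemma fromEdgeSet_conn_lift {G : SimpleGraph V} (hvu : v0 ≠ u) {S : Set (Sym2 V)}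
    (hS : S ⊆ G.edgeSet) (heS : s(v0, u) ∈ S)
    (hconn : (SimpleGraph.fromEdgeSet (Sym2.map (cproj hvu) '' (S \ {s(v0, u)}))).Connected) :
    (SimpleGraph.fromEdgeSet S).Connected := by
  rw [connected_iff_exists_forall_reachable]
  refine ⟨v0, fun x => ?_⟩
  rw [reachable_iff_reflTransGen]
  have hx' : ReflTransGen (fromEdgeSet (Sym2.map (cproj hvu) '' (S \ {s(v0, u)}))).Adj
      ⟨v0, hvu⟩ (cproj hvu x) := by
    rw [← reachable_iff_reflTransGen]
    exact hconn.preconnected _ _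
  refine lift_reach hvu ?_ ?_ hx' x rfl
  · intro a' b' hab
    rw [fromEdgeSet_adj] at hab
    obtain ⟨⟨f, ⟨hf1, hf2⟩, hf3⟩, hne⟩ := hab
    induction f with
    | _ a b =>
      rw [Sym2.map_pair_eq, Sym2.eq_iff] at hf3
      rw [Set.mem_singleton_iff] at hf2
      have hadj : G.Adj a b := (SimpleGraph.mem_edgeSet _).mp (hS hf1)
      rcases hf3 with ⟨h1, h2⟩ | ⟨h1, h2⟩
      · exact ⟨a, b, h1, h2, (fromEdgeSet_adj _).mpr ⟨hf1, hadj.ne⟩⟩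
      · exact ⟨b, a, h2, h1, (fromEdgeSet_adj _).mpr ⟨Sym2.eq_swap ▸ hf1, hadj.ne'⟩⟩
  · exact ReflTransGen.single ((fromEdgeSet_adj _).mpr ⟨heS, hvu⟩)

end Contract

end St18


namespace St18

open Relation SimpleGraph

section RelExtra

variable {α : Type*} {r : α → α → Prop}

lemma rtg_rtg_closed {a b : α} (h1 : ReflTransGen r a b)
    (h2 : ReflTransGen r b a) (hne : a ≠ b) : TransGen r a a := by
  rcases h1.cases_head with h | ⟨c, hc, hcb⟩
  · exact absurd h hne
  · exact TransGen.head' hc (hcb.trans h2)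

lemma rtg_transGen_of_ne {a b : α} (h : ReflTransGen r a b) (hne : a ≠ b) :
    TransGen r a b := by
  rcases h.cases_head with h' | ⟨c, hc, hcb⟩
  · exact absurd h' hne
  · exact TransGen.head' hc hcb

end RelExtra

section OrientMaps

variable {V : Type*} [DecidableEq V] {v0 u : V} {G : SimpleGraph V}

/-- Acyclic orientations reachable from `v0`, in relation form. -/
def ASet (G : SimpleGraph V) (v0 : V) : Set (GraphOrientation G) :=
  {O | (∀ v, ReflTransGen O.dir v0 v) ∧ ∀ x, ¬ TransGen O.dir x x}

lemma ASet_eq (G : SimpleGraph V) (v0 : V) :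
    {O : GraphOrientation G | O.IsConnectedFrom v0 ∧ ¬ ∃ C : Set (Sym2 V), O.IsDirCycle C}
      = ASet G v0 := by
  ext O
  simp only [ASet, Set.mem_setOf_eq, GraphOrientation.IsConnectedFrom, GraphOrientation.Reaches,
    hasDirCycle_iff, not_exists]

lemma dir_e (hadj : G.Adj v0 u) {O : GraphOrientation G} (hO : O ∈ ASet G v0) : O.dir v0 u := by
  rw [O.dir_iff_not _ _ hadj]
  intro hd
  exact hO.2 u (TransGen.head' hd (hO.1 u))

lemma edge_ne_e {x y : V} (h1 : y ≠ v0) (h2 : y ≠ u) : s(x, y) ≠ s(v0, u) := by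
  intro h
  rcases edge_eq_iff.mp h with ⟨_, h'⟩ | ⟨_, h'⟩
  · exact h2 h'
  · exact h1 h' 

lemma edge_ne_e' {x y : V} (h1 : x ≠ v0) (h2 : x ≠ u) : s(x, y) ≠ s(v0, u) := by
  intro h
  exact edge_ne_e h1 h2 (Sym2.eq_swap.trans h)

/-- A two-step directed path between two vertices identified by the contraction is
impossible for orientations in case (ii). -/
lemma no_two_step (hadj : G.Adj v0 u) {O : GraphOrientation G} (hO : O ∈ ASet G v0)
    (hP : ¬ ReflTransGen (fun x y => O.dir x y ∧ s(x, y) ≠ s(v0, u)) v0 u) {a b c : V}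
    (h1 : O.dir a b) (h2 : O.dir b c) (hac : a ≠ c)
    (hpj : cproj hadj.ne a = cproj hadj.ne c) : False := by
  rcases cproj_eq_cproj _ hpj with h | ⟨ha, hc⟩
  · exact hac h
  have hab : a ≠ b := (O.adj_of_dir _ _ h1).ne
  have hbc : b ≠ c := (O.adj_of_dir _ _ h2).ne
  rcases ha with ha | ha <;> rcases hc with hc | hc
  · exact hac (ha.trans hc.symm)
  · -- a = v0, c = u
    have hbv : b ≠ v0 := fun h => hab (ha.trans h.symm)
    have hbu : b ≠ u := fun h => hbc (h.trans hc.symm)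
    exact hP (ReflTransGen.head ⟨ha ▸ h1, edge_ne_e hbv hbu⟩
      (ReflTransGen.single ⟨hc ▸ h2, edge_ne_e' hbv hbu⟩))
  · -- a = u, c = v0
    exact hO.2 u (TransGen.head (ha ▸ h1) (TransGen.head (hc ▸ h2)
      (TransGen.single (dir_e hadj hO))))
  · exact hac (ha.trans hc.symm)

/-! #### Deletion -/

def restrictO (v0 u : V) (O : GraphOrientation G) :
    GraphOrientation (G.deleteEdges {s(v0, u)}) where
  dir x y := O.dir x y ∧ s(x, y) ≠ s(v0, u)
  adj_of_dir x y h := deleteEdges_adj.mpr ⟨O.adj_of_dir x y h.1, by simpa using h.2⟩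
  dir_iff_not x y h := by
    rw [deleteEdges_adj, Set.mem_singleton_iff] at h
    obtain ⟨hadj, hne⟩ := h
    have hne' : s(y, x) ≠ s(v0, u) := fun hc => hne (Sym2.eq_swap.trans hc)
    have := O.dir_iff_not x y hadj
    constructor
    · rintro ⟨hd, _⟩ ⟨hd', _⟩
      exact (this.mp hd) hd'
    · intro hnd
      refine ⟨this.mpr fun hd' => hnd ⟨hd', hne'⟩, hne⟩

lemma dir_del_ne {Od : GraphOrientation (G.deleteEdges {s(v0, u)})} {a b : V}
    (h : Od.dir a b) : s(a, b) ≠ s(v0, u) := by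
  have := deleteEdges_adj.mp (Od.adj_of_dir _ _ h)
  simpa using this.2

def extendO (hadj : G.Adj v0 u) (Od : GraphOrientation (G.deleteEdges {s(v0, u)})) :
    GraphOrientation G where
  dir x y := Od.dir x y ∨ (x = v0 ∧ y = u)
  adj_of_dir x y h := by
    rcases h with h | ⟨h1, h2⟩
    · exact (deleteEdges_adj.mp (Od.adj_of_dir x y h)).1
    · subst h1; subst h2; exact hadj
  dir_iff_not x y hxy := by
    by_cases he : s(x, y) = s(v0, u)
    · rcases edge_eq_iff.mp he with ⟨h1, h2⟩ | ⟨h1, h2⟩ <;> subst h1 <;> subst h2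
      · constructor
        · rintro _ (h | ⟨h1, _⟩)
          · exact dir_del_ne h Sym2.eq_swap
          · exact hadj.ne h1.symm
        · intro _; exact Or.inr ⟨rfl, rfl⟩
      · constructor
        · rintro (h | ⟨h1, _⟩)
          · exact absurd Sym2.eq_swap (dir_del_ne h)
          · exact absurd h1.symm hadj.ne
        · intro hn
          exact absurd (Or.inr ⟨rfl, rfl⟩) hn
    · have hd : (G.deleteEdges {s(v0, u)}).Adj x y :=
        deleteEdges_adj.mpr ⟨hxy, by simpa using he⟩
      have h1 : ¬(x = v0 ∧ y = u) := fun h => he (by rw [h.1, h.2])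
      have h2 : ¬(y = v0 ∧ x = u) := fun h => he (by rw [h.1, h.2, Sym2.eq_swap])
      have h3 := Od.dir_iff_not x y hd
      constructor
      · rintro (h | h) <;> [skip; exact absurd h h1]
        rintro (h' | h')
        · exact (h3.mp h) h'
        · exact h2 h'
      · intro hn
        refine Or.inl (h3.mpr fun h' => hn (Or.inl h'))

lemma restrictO_mem (hadj : G.Adj v0 u) {O : GraphOrientation G} (hO : O ∈ ASet G v0)
    (hP : ReflTransGen (fun x y => O.dir x y ∧ s(x, y) ≠ s(v0, u)) v0 u) :
    restrictO v0 u O ∈ ASet (G.deleteEdges {s(v0, u)}) v0 := by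
  constructor
  · intro x
    have hsub : ∀ {a b}, O.dir a b → (restrictO v0 u O).dir a b ∨ (a = v0 ∧ b = u) := by
      intro a b h
      by_cases he : s(a, b) = s(v0, u)
      · rcases edge_eq_iff.mp he with ⟨h1, h2⟩ | ⟨h1, h2⟩
        · exact Or.inr ⟨h1, h2⟩
        · subst h1; subst h2
          exact absurd h (dir_asymm O (dir_e hadj hO))
      · exact Or.inl ⟨h, he⟩
    rcases rtg_union_single hsub (hO.1 x) with h | ⟨h1, _⟩
    · exact h
    · exact ReflTransGen.trans hP h1
  · intro x hx
    exact hO.2 x (TransGen.mono (fun a b h => h.1) _ _ hx)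

lemma extendO_mem (hadj : G.Adj v0 u) {Od : GraphOrientation (G.deleteEdges {s(v0, u)})}
    (hOd : Od ∈ ASet (G.deleteEdges {s(v0, u)}) v0) :
    extendO hadj Od ∈ ASet G v0 ∧
      ReflTransGen (fun x y => (extendO hadj Od).dir x y ∧ s(x, y) ≠ s(v0, u)) v0 u := by
  have hsub : ∀ {x y}, (extendO hadj Od).dir x y → Od.dir x y ∨ (x = v0 ∧ y = u) := fun h => h
  refine ⟨⟨?_, ?_⟩, ?_⟩
  · intro x
    exact ReflTransGen.mono (fun a b h => Or.inl h) _ _ (hOd.1 x)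
  · intro x hx
    rcases tg_closed_union_single hsub hx with ⟨y, hy⟩ | h
    · exact hOd.2 y hy
    · exact hOd.2 u (rtg_rtg_closed h (hOd.1 u) (fun hc => hadj.ne hc.symm))
  · exact ReflTransGen.mono (fun a b h => ⟨Or.inl h, dir_del_ne h⟩) _ _ (hOd.1 u)

lemma extend_restrict (hadj : G.Adj v0 u) {O : GraphOrientation G} (hO : O ∈ ASet G v0) :
    extendO hadj (restrictO v0 u O) = O := by
  apply orient_ext
  intro a b
  show (O.dir a b ∧ s(a, b) ≠ s(v0, u)) ∨ (a = v0 ∧ b = u) ↔ O.dir a b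
  constructor
  · rintro (⟨h, _⟩ | ⟨h1, h2⟩)
    · exact h
    · subst h1; subst h2; exact dir_e hadj hO
  · intro h
    by_cases he : s(a, b) = s(v0, u)
    · rcases edge_eq_iff.mp he with ⟨h1, h2⟩ | ⟨h1, h2⟩
      · exact Or.inr ⟨h1, h2⟩
      · subst h1; subst h2
        exact absurd h (dir_asymm O (dir_e hadj hO))
    · exact Or.inl ⟨h, he⟩

lemma restrict_extend (hadj : G.Adj v0 u) (Od : GraphOrientation (G.deleteEdges {s(v0, u)})) :
    restrictO v0 u (extendO hadj Od) = Od := by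
  apply orient_ext
  intro a b
  show (Od.dir a b ∨ (a = v0 ∧ b = u)) ∧ s(a, b) ≠ s(v0, u) ↔ Od.dir a b
  constructor
  · rintro ⟨h | ⟨h1, h2⟩, hne⟩
    · exact h
    · subst h1; subst h2; exact absurd rfl hne
  · intro h
    exact ⟨Or.inl h, dir_del_ne h⟩

/-! #### Contraction -/

def contractO (hadj : G.Adj v0 u) (O : GraphOrientation G) (hO : O ∈ ASet G v0)
    (hP : ¬ ReflTransGen (fun x y => O.dir x y ∧ s(x, y) ≠ s(v0, u)) v0 u) :
    GraphOrientation (cGraph G hadj.ne) where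
  dir a' b' := ∃ a b, cproj hadj.ne a = a' ∧ cproj hadj.ne b = b' ∧ O.dir a b ∧
    s(a, b) ≠ s(v0, u)
  adj_of_dir a' b' h := by
    obtain ⟨a, b, ha, hb, hd, hne⟩ := h
    rw [← ha, ← hb]
    exact cGraph_adj hadj.ne (O.adj_of_dir _ _ hd) hne
  dir_iff_not a' b' hab := by
    constructor
    · rintro ⟨a, b, ha, hb, hd, hne⟩ ⟨c, d, hc, hd2, hd3, hne2⟩
      by_cases hbc : b = c
      · subst hbc
        by_cases had : a = d
        · subst had; exact dir_asymm O hd hd3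
        · exact no_two_step hadj hO hP hd hd3 had (ha.trans hd2.symm)
      · by_cases had : a = d
        · subst had
          exact no_two_step hadj hO hP hd3 hd (fun h => hbc h.symm) (hc.trans hb.symm)
        · have h1 : b' = ⟨v0, hadj.ne⟩ := by
            rcases cproj_eq_cproj hadj.ne (hb.trans hc.symm) with h | ⟨h2, _⟩
            · exact absurd h hbc
            · rw [← hb]
              rcases h2 with h2 | h2 <;> subst h2
              · exact cproj_v0 hadj.ne
              · exact cproj_u hadj.ne
          have h2 : a' = ⟨v0, hadj.ne⟩ := by
            rcases cproj_eq_cproj hadj.ne (ha.trans hd2.symm) with h | ⟨h2, _⟩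
            · exact absurd h had
            · rw [← ha]
              rcases h2 with h2 | h2 <;> subst h2
              · exact cproj_v0 hadj.ne
              · exact cproj_u hadj.ne
          exact hab.ne (h2.trans h1.symm)
    · intro hnd
      obtain ⟨a, b, ha, hb, hA, hne⟩ := cGraph_adj_elim hadj.ne hab
      by_cases hd : O.dir a b
      · exact ⟨a, b, ha, hb, hd, hne⟩
      · exfalso
        apply hnd
        refine ⟨b, a, hb, ha, (O.dir_iff_not b a hA.symm).mpr hd, ?_⟩
        intro hc
        exact hne (Sym2.eq_swap.trans hc)

def liftO (hadj : G.Adj v0 u) (Ob : GraphOrientation (cGraph G hadj.ne)) :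
    GraphOrientation G where
  dir x y := G.Adj x y ∧ ((x = v0 ∧ y = u) ∨
    (s(x, y) ≠ s(v0, u) ∧ Ob.dir (cproj hadj.ne x) (cproj hadj.ne y)))
  adj_of_dir x y h := h.1
  dir_iff_not x y hxy := by
    by_cases he : s(x, y) = s(v0, u)
    · rcases edge_eq_iff.mp he with ⟨h1, h2⟩ | ⟨h1, h2⟩ <;> subst h1 <;> subst h2
      · constructor
        · rintro _ ⟨_, h | ⟨hne, _⟩⟩
          · exact hadj.ne h.1.symm
          · exact hne Sym2.eq_swap
        · intro _
          exact ⟨hxy, Or.inl ⟨rfl, rfl⟩⟩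
      · constructor
        · rintro ⟨_, h | ⟨hne, _⟩⟩
          · exact absurd h.1.symm hadj.ne
          · exact absurd Sym2.eq_swap hne
        · intro hn
          exact absurd ⟨hxy.symm, Or.inl ⟨rfl, rfl⟩⟩ hn
    · have he' : s(y, x) ≠ s(v0, u) := fun hc => he (Sym2.eq_swap.trans hc)
      have hadj' : (cGraph G hadj.ne).Adj (cproj hadj.ne x) (cproj hadj.ne y) :=
        cGraph_adj hadj.ne hxy he
      have h3 := Ob.dir_iff_not _ _ hadj'
      have h1 : ¬(x = v0 ∧ y = u) := fun h => he (by rw [h.1, h.2])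
      have h2 : ¬(y = v0 ∧ x = u) := fun h => he' (by rw [h.1, h.2])
      constructor
      · rintro ⟨_, h | ⟨_, hd⟩⟩ ⟨_, h' | ⟨_, hd'⟩⟩
        · exact h1 h
        · exact h1 h
        · exact h2 h'
        · exact (h3.mp hd) hd'
      · intro hn
        refine ⟨hxy, Or.inr ⟨he, h3.mpr fun hd' => hn ⟨hxy.symm, Or.inr ⟨he', hd'⟩⟩⟩⟩

end OrientMaps

end St18


namespace St18

open Relation SimpleGraph

section OrientMaps2

variable {V : Type*} [DecidableEq V] {v0 u : V} {G : SimpleGraph V}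

lemma conn_of_ASet_mem {O : GraphOrientation G} (hO : O ∈ ASet G v0) : G.Connected := by
  rw [connected_iff_exists_forall_reachable]
  exact ⟨v0, fun x => (reachable_iff_reflTransGen _ _).mpr
    (ReflTransGen.mono (fun a b h => O.adj_of_dir a b h) _ _ (hO.1 x))⟩

lemma contractO_mem (hadj : G.Adj v0 u) {O : GraphOrientation G} (hO : O ∈ ASet G v0)
    (hP : ¬ ReflTransGen (fun x y => O.dir x y ∧ s(x, y) ≠ s(v0, u)) v0 u) :
    contractO hadj O hO hP ∈ ASet (cGraph G hadj.ne) ⟨v0, hadj.ne⟩ := by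
  constructor
  · intro x'
    have hproj := rtg_map_stay (f := cproj hadj.ne) (r := O.dir)
        (r' := (contractO hadj O hO hP).dir) ?_ (hO.1 x'.val)
    · rwa [cproj_v0, cproj_val] at hproj
    · intro a b hab
      by_cases he : s(a, b) = s(v0, u)
      · rcases edge_eq_iff.mp he with ⟨h1, h2⟩ | ⟨h1, h2⟩
        · exact Or.inr (by rw [h1, h2, cproj_v0, cproj_u])
        · exact Or.inr (by rw [h1, h2, cproj_u, cproj_v0])
      · exact Or.inl ⟨a, b, rfl, rfl, hab, he⟩
  · intro x' hx'
    have hvallift : ∀ (a' b' : {x : V // x ≠ u}),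
        ((contractO hadj O hO hP).dir a' b' ∧ a' ≠ ⟨v0, hadj.ne⟩ ∧ b' ≠ ⟨v0, hadj.ne⟩) →
          O.dir a'.val b'.val ∧ s(a'.val, b'.val) ≠ s(v0, u) := by
      rintro a' b' ⟨⟨a, b, ha, hb, hd, hne⟩, hav, hbv⟩
      have h1 : a = a'.val := cproj_eq_val hadj.ne ha hav
      have h2 : b = b'.val := cproj_eq_val hadj.ne hb hbv
      have hbvne : b'.val ≠ v0 := fun h => hbv (Subtype.ext h)
      refine ⟨h1 ▸ h2 ▸ hd, edge_ne_e hbvne b'.prop⟩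
    rcases tg_closed_avoid (p := (⟨v0, hadj.ne⟩ : {x : V // x ≠ u})) hx' with hint | hvb
    · exact hO.2 x'.val (TransGen.lift Subtype.val
        (fun a' b' h => (hvallift a' b' h).1) _ _ hint)
    · have hnl : ¬ (contractO hadj O hO hP).dir ⟨v0, hadj.ne⟩ ⟨v0, hadj.ne⟩ := by
        rintro ⟨a, b, ha, hb, hd, hne⟩
        have hane : a ≠ b := (O.adj_of_dir _ _ hd).ne
        rcases cproj_eq_vb hadj.ne ha with h1 | h1 <;> rcases cproj_eq_vb hadj.ne hb with h2 | h2
        · exact hane (h1.trans h2.symm)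
        · exact hne (by rw [h1, h2])
        · exact hne (by rw [h1, h2, Sym2.eq_swap])
        · exact hane (h1.trans h2.symm)
      obtain ⟨c', d', hstep1, hmid, hstep2⟩ := tg_closed_at hvb hnl
      have hc'ne : c' ≠ ⟨v0, hadj.ne⟩ := fun h => hnl (h ▸ hstep1)
      have hd'ne : d' ≠ ⟨v0, hadj.ne⟩ := fun h => hnl (h ▸ hstep2)
      obtain ⟨a, x1, ha, hx1, hd1, hne1⟩ := hstep1
      obtain ⟨y, c, hy, hc, hd2, hne2⟩ := hstep2
      have hx1v : x1 = c'.val := cproj_eq_val hadj.ne hx1 hc'ne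
      have hyv : y = d'.val := cproj_eq_val hadj.ne hy hd'ne
      have hmid' : ReflTransGen (fun x y => O.dir x y ∧ s(x, y) ≠ s(v0, u)) c'.val d'.val :=
        ReflTransGen.lift Subtype.val (fun a' b' h => hvallift a' b' ⟨h.1, h.2.1, h.2.2⟩) _ _ hmid
      have hmidO : ReflTransGen O.dir c'.val d'.val := ReflTransGen.mono (fun a b h => h.1) _ _ hmid'
      have hc'u : c'.val ≠ u := c'.prop
      have hc'v0 : c'.val ≠ v0 := fun h => hc'ne (Subtype.ext h)
      have hd'u : d'.val ≠ u := d'.prop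
      have hd'v0 : d'.val ≠ v0 := fun h => hd'ne (Subtype.ext h)
      rcases cproj_eq_vb hadj.ne ha with h1 | h1 <;> rcases cproj_eq_vb hadj.ne hc with h2 | h2
      · -- a = v0, c = v0 : directed cycle through v0
        refine hO.2 v0 (TransGen.head' (h1 ▸ hx1v ▸ hd1) (hmidO.tail (h2 ▸ hyv ▸ hd2)))
      · -- a = v0, c = u : contradicts case (ii)
        refine hP (ReflTransGen.head ⟨h1 ▸ hx1v ▸ hd1, edge_ne_e hc'v0 hc'u⟩
          (hmid'.tail ⟨h2 ▸ hyv ▸ hd2, edge_ne_e' hd'v0 hd'u⟩))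
      · -- a = u, c = v0 : cycle through u using the edge
        refine hO.2 u (TransGen.head' (h1 ▸ hx1v ▸ hd1)
          ((hmidO.tail (h2 ▸ hyv ▸ hd2)).tail (dir_e hadj hO)))
      · -- a = u, c = u : directed cycle through u
        refine hO.2 u (TransGen.head' (h1 ▸ hx1v ▸ hd1) (hmidO.tail (h2 ▸ hyv ▸ hd2)))

lemma liftO_mem (hadj : G.Adj v0 u) {Ob : GraphOrientation (cGraph G hadj.ne)}
    (hOb : Ob ∈ ASet (cGraph G hadj.ne) ⟨v0, hadj.ne⟩) :
    liftO hadj Ob ∈ ASet G v0 ∧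
      ¬ ReflTransGen (fun x y => (liftO hadj Ob).dir x y ∧ s(x, y) ≠ s(v0, u)) v0 u := by
  have hstep : ∀ a b, (liftO hadj Ob).dir a b →
      Ob.dir (cproj hadj.ne a) (cproj hadj.ne b) ∨ cproj hadj.ne a = cproj hadj.ne b := by
    rintro a b ⟨hA, ⟨h1, h2⟩ | ⟨hne, hd⟩⟩
    · exact Or.inr (by rw [h1, h2, cproj_v0, cproj_u])
    · exact Or.inl hd
  refine ⟨⟨?_, ?_⟩, ?_⟩
  · intro x
    refine lift_reach hadj.ne ?_ ?_ (hOb.1 (cproj hadj.ne x)) x rfl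
    · intro a' b' hd
      obtain ⟨a, b, ha, hb, hA, hne⟩ := cGraph_adj_elim hadj.ne (Ob.adj_of_dir _ _ hd)
      exact ⟨a, b, ha, hb, hA, Or.inr ⟨hne, by rw [ha, hb]; exact hd⟩⟩
    · exact ReflTransGen.single ⟨hadj, Or.inl ⟨rfl, rfl⟩⟩
  · intro x hx
    rcases tg_map_stay hstep hx with h | h
    · exact hOb.2 _ h
    · have hstay : ∀ {a b}, ((liftO hadj Ob).dir a b ∧ cproj hadj.ne a = cproj hadj.ne b) →
          a = v0 ∧ b = u := by
        rintro a b ⟨⟨hA, ⟨h1, h2⟩ | ⟨hne, _⟩⟩, hpj⟩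
        · exact ⟨h1, h2⟩
        · exact absurd hpj (cproj_ne hadj.ne hA.ne hne)
      rcases (Relation.TransGen.head'_iff.mp h) with ⟨c, hxc, hcx⟩
      obtain ⟨hx1, hx2⟩ := hstay hxc
      subst hx2
      rcases hcx.cases_head with h' | ⟨m, hum, _⟩
      · exact hadj.ne (hx1 ▸ h').symm
      · exact hadj.ne (hstay hum).1.symm
  · intro hp
    have htg := rtg_transGen_of_ne hp hadj.ne
    have h2 : ∀ a b, ((liftO hadj Ob).dir a b ∧ s(a, b) ≠ s(v0, u)) →
        Ob.dir (cproj hadj.ne a) (cproj hadj.ne b) := by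
      rintro a b ⟨⟨hA, ⟨h1, h2⟩ | ⟨_, hd⟩⟩, hne⟩
      · exact absurd (by rw [h1, h2]) hne
      · exact hd
    have : TransGen Ob.dir (cproj hadj.ne v0) (cproj hadj.ne u) := TransGen.lift (cproj hadj.ne) h2 _ _ htg
    rw [cproj_v0, cproj_u] at this
    exact hOb.2 _ this

lemma contract_lift (hadj : G.Adj v0 u) (Ob : GraphOrientation (cGraph G hadj.ne))
    (h1 : liftO hadj Ob ∈ ASet G v0)
    (h2 : ¬ ReflTransGen (fun x y => (liftO hadj Ob).dir x y ∧ s(x, y) ≠ s(v0, u)) v0 u) :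
    contractO hadj (liftO hadj Ob) h1 h2 = Ob := by
  apply orient_ext
  intro a' b'
  constructor
  · rintro ⟨a, b, ha, hb, ⟨hA, ⟨he1, he2⟩ | ⟨hne', hd⟩⟩, hne⟩
    · exact absurd (by rw [he1, he2]) hne
    · exact ha ▸ hb ▸ hd
  · intro hd
    obtain ⟨a, b, ha, hb, hA, hne⟩ := cGraph_adj_elim hadj.ne (Ob.adj_of_dir _ _ hd)
    exact ⟨a, b, ha, hb, ⟨hA, Or.inr ⟨hne, by rw [ha, hb]; exact hd⟩⟩, hne⟩

lemma lift_contract (hadj : G.Adj v0 u) {O : GraphOrientation G} (hO : O ∈ ASet G v0)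
    (hP : ¬ ReflTransGen (fun x y => O.dir x y ∧ s(x, y) ≠ s(v0, u)) v0 u) :
    liftO hadj (contractO hadj O hO hP) = O := by
  apply orient_ext
  intro a b
  constructor
  · rintro ⟨hA, ⟨h1, h2⟩ | ⟨hne, c, d, hc, hd, hdir, hne2⟩⟩
    · exact h1 ▸ h2 ▸ dir_e hadj hO
    · by_cases hdab : O.dir a b
      · exact hdab
      exfalso
      have hba : O.dir b a := (O.dir_iff_not b a hA.symm).mpr hdab
      by_cases hca : c = a
      · subst hca
        by_cases hdb : d = b
        · subst hdb; exact hdab hdir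
        · -- chain b → c(=a) → d with cproj b = cproj d
          exact no_two_step hadj hO hP hba hdir (fun h => hdb h.symm) (hd.symm ▸ rfl : _)
      · by_cases hdb : d = b
        · subst hdb
          -- chain c → d(=b) → a with cproj c = cproj a
          exact no_two_step hadj hO hP hdir hba hca hc
        · -- both endpoints differ: cproj a = cproj b, contradiction
          have hpa : cproj hadj.ne a = ⟨v0, hadj.ne⟩ := by
            rcases cproj_eq_cproj hadj.ne hc with h | ⟨_, h4⟩
            · exact absurd h hca
            · rcases h4 with h4 | h4 <;> rw [h4]
              · exact cproj_v0 hadj.ne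
              · exact cproj_u hadj.ne
          have hpb : cproj hadj.ne b = ⟨v0, hadj.ne⟩ := by
            rcases cproj_eq_cproj hadj.ne hd with h | ⟨_, h4⟩
            · exact absurd h hdb
            · rcases h4 with h4 | h4 <;> rw [h4]
              · exact cproj_v0 hadj.ne
              · exact cproj_u hadj.ne
          exact cproj_ne hadj.ne hA.ne hne (hpa.trans hpb.symm)
  · intro h
    refine ⟨O.adj_of_dir _ _ h, ?_⟩
    by_cases he : s(a, b) = s(v0, u)
    · rcases edge_eq_iff.mp he with ⟨h1, h2⟩ | ⟨h1, h2⟩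
      · exact Or.inl ⟨h1, h2⟩
      · exfalso
        exact dir_asymm O (dir_e hadj hO) (h1 ▸ h2 ▸ h)
    · exact Or.inr ⟨he, a, b, rfl, rfl, h, he⟩

lemma ncard_A1 (hadj : G.Adj v0 u) :
    (ASet G v0 ∩ {O | ReflTransGen (fun x y => O.dir x y ∧ s(x, y) ≠ s(v0, u)) v0 u}).ncard
      = (ASet (G.deleteEdges {s(v0, u)}) v0).ncard := by
  rw [← Nat.card_coe_set_eq, ← Nat.card_coe_set_eq]
  apply Nat.card_congr
  refine ⟨fun O => ⟨restrictO v0 u O.val, restrictO_mem hadj O.prop.1 O.prop.2⟩,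
    fun Od => ⟨extendO hadj Od.val,
      (extendO_mem hadj Od.prop).1, (extendO_mem hadj Od.prop).2⟩, ?_, ?_⟩
  · rintro ⟨O, hO⟩
    exact Subtype.ext (extend_restrict hadj hO.1)
  · rintro ⟨Od, hOd⟩
    exact Subtype.ext (restrict_extend hadj Od)

lemma ncard_A2 (hadj : G.Adj v0 u) :
    (ASet G v0 ∩ {O | ¬ ReflTransGen (fun x y => O.dir x y ∧ s(x, y) ≠ s(v0, u)) v0 u}).ncard
      = (ASet (cGraph G hadj.ne) ⟨v0, hadj.ne⟩).ncard := by
  rw [← Nat.card_coe_set_eq, ← Nat.card_coe_set_eq]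
  apply Nat.card_congr
  refine ⟨fun O => ⟨contractO hadj O.val O.prop.1 O.prop.2, contractO_mem hadj _ _⟩,
    fun Ob => ⟨liftO hadj Ob.val,
      (liftO_mem hadj Ob.prop).1, (liftO_mem hadj Ob.prop).2⟩, ?_, ?_⟩
  · rintro ⟨O, hO⟩
    exact Subtype.ext (lift_contract hadj hO.1 hO.2)
  · rintro ⟨Ob, hOb⟩
    exact Subtype.ext (contract_lift hadj Ob (liftO_mem hadj hOb).1 (liftO_mem hadj hOb).2)

lemma ncard_ASet_split [Finite V] (hadj : G.Adj v0 u) :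
    (ASet G v0).ncard = (ASet (G.deleteEdges {s(v0, u)}) v0).ncard
      + (ASet (cGraph G hadj.ne) ⟨v0, hadj.ne⟩).ncard := by
  have hfin : Finite (GraphOrientation G) := orient_finite
  rw [← ncard_A1 hadj, ← ncard_A2 hadj]
  rw [← Set.ncard_union_eq (by
    refine Set.disjoint_left.mpr ?_
    rintro O ⟨_, hPp⟩ ⟨_, hPn⟩
    exact hPn hPp) (Set.toFinite _) (Set.toFinite _)]
  congr 1
  rw [← Set.inter_union_distrib_left]
  have huniv : ({O : GraphOrientation G |
        ReflTransGen (fun x y => O.dir x y ∧ s(x, y) ≠ s(v0, u)) v0 u} ∪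
      {O : GraphOrientation G |
        ¬ ReflTransGen (fun x y => O.dir x y ∧ s(x, y) ≠ s(v0, u)) v0 u}) = Set.univ := by
    ext O
    by_cases h : ReflTransGen (fun x y => O.dir x y ∧ s(x, y) ≠ s(v0, u)) v0 u
    · simp only [Set.mem_union, Set.mem_setOf_eq, Set.mem_univ, iff_true]
      exact Or.inl h
    · simp only [Set.mem_union, Set.mem_setOf_eq, Set.mem_univ, iff_true]
      exact Or.inr h
  rw [huniv, Set.inter_univ]


end OrientMaps2

end St18


namespace St18

section SumLemmas

variable {α β : Type*} [DecidableEq α] [DecidableEq β]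

/-- Key inclusion-exclusion: summing `(-1)^|T|` over subsets of `P` with image exactly `S'`
gives `(-1)^|S'|`. -/
lemma key_sum (φ : α → β) :
    ∀ (S' : Finset β) (P : Finset α), (∀ a ∈ P, φ a ∈ S') → (∀ f ∈ S', ∃ a ∈ P, φ a = f) →
      (∑ T ∈ P.powerset.filter (fun T => T.image φ = S'), (-1 : ℤ) ^ T.card)
        = (-1) ^ S'.card := by
  intro S'
  induction S' using Finset.cons_induction with
  | empty =>
    intro P hmap hsurj
    have hP : P = ∅ := Finset.eq_empty_of_forall_notMem (fun a ha => by simpa using hmap a ha)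
    subst hP
    simp [Finset.filter_singleton]
  | cons f S'' hf ih =>
    intro P hmap hsurj
    set P1 := P.filter (fun a => φ a = f) with hP1
    set P2 := P.filter (fun a => φ a ≠ f) with hP2
    have hdisj : Disjoint P1 P2 := by
      rw [Finset.disjoint_left]
      intro a ha1 ha2
      exact (Finset.mem_filter.mp ha2).2 (Finset.mem_filter.mp ha1).2
    -- reindex the sum by pairs (T ∩ P1, T ∩ P2)
    have hbij : (∑ T ∈ P.powerset.filter (fun T => T.image φ = Finset.cons f S'' hf),
        (-1 : ℤ) ^ T.card) =
        ∑ p ∈ (P1.powerset.filter (fun T => T.Nonempty)) ×ˢ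
            (P2.powerset.filter (fun T => T.image φ = S'')),
          (-1 : ℤ) ^ (p.1.card + p.2.card) := by
      refine Finset.sum_nbij' (fun T => (T ∩ P1, T ∩ P2)) (fun p => p.1 ∪ p.2) ?_ ?_ ?_ ?_ ?_
      · intro T hT
        rw [Finset.mem_filter, Finset.mem_powerset] at hT
        obtain ⟨hTP, hTim⟩ := hT
        rw [Finset.mem_product]
        constructor
        · rw [Finset.mem_filter, Finset.mem_powerset]
          refine ⟨Finset.inter_subset_right, ?_⟩
          have : f ∈ T.image φ := by rw [hTim]; exact Finset.mem_cons_self f S''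
          obtain ⟨a, haT, hfa⟩ := Finset.mem_image.mp this
          exact ⟨a, Finset.mem_inter.mpr ⟨haT, Finset.mem_filter.mpr ⟨hTP haT, hfa⟩⟩⟩
        · rw [Finset.mem_filter, Finset.mem_powerset]
          refine ⟨Finset.inter_subset_right, ?_⟩
          apply Finset.Subset.antisymm
          · intro g hg
            obtain ⟨a, haT, hga⟩ := Finset.mem_image.mp hg
            obtain ⟨haT', haP2⟩ := Finset.mem_inter.mp haT
            have : φ a ∈ Finset.cons f S'' hf := by
              rw [← hTim]; exact Finset.mem_image_of_mem φ haT'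
            rw [Finset.mem_cons] at this
            rcases this with h | h
            · exact absurd h (Finset.mem_filter.mp haP2).2
            · exact hga ▸ h
          · intro g hg
            have hgS' : g ∈ T.image φ := by
              rw [hTim]; exact Finset.mem_cons_of_mem hg
            obtain ⟨a, haT, hga⟩ := Finset.mem_image.mp hgS'
            have haP2 : a ∈ P2 := Finset.mem_filter.mpr ⟨hTP haT,
              fun hc => hf (hc ▸ hga ▸ hg)⟩
            exact Finset.mem_image.mpr ⟨a, Finset.mem_inter.mpr ⟨haT, haP2⟩, hga⟩
      · rintro ⟨T1, T2⟩ hp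
        rw [Finset.mem_product] at hp
        obtain ⟨h1, h2⟩ := hp
        rw [Finset.mem_filter, Finset.mem_powerset] at h1 h2
        rw [Finset.mem_filter, Finset.mem_powerset]
        constructor
        · exact Finset.union_subset (h1.1.trans (Finset.filter_subset _ _))
            (h2.1.trans (Finset.filter_subset _ _))
        · rw [Finset.image_union]
          have him1 : T1.image φ = {f} := by
            apply Finset.Subset.antisymm
            · intro g hg
              obtain ⟨a, haT, hga⟩ := Finset.mem_image.mp hg
              rw [Finset.mem_singleton, ← hga]
              exact (Finset.mem_filter.mp (h1.1 haT)).2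
            · intro g hg
              rw [Finset.mem_singleton] at hg
              obtain ⟨a, ha⟩ := h1.2
              exact Finset.mem_image.mpr ⟨a, ha, hg ▸ (Finset.mem_filter.mp (h1.1 ha)).2⟩
          rw [him1, h2.2, Finset.cons_eq_insert]
          ext g
          simp [Finset.mem_insert]
      · intro T hT
        rw [Finset.mem_filter, Finset.mem_powerset] at hT
        show T ∩ P1 ∪ T ∩ P2 = T
        rw [← Finset.inter_union_distrib_left]
        rw [hP1, hP2, Finset.filter_union_filter_not_eq]
        exact Finset.inter_eq_left.mpr hT.1
      · rintro ⟨T1, T2⟩ hp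
        rw [Finset.mem_product] at hp
        obtain ⟨h1, h2⟩ := hp
        rw [Finset.mem_filter, Finset.mem_powerset] at h1 h2
        show ((T1 ∪ T2) ∩ P1, (T1 ∪ T2) ∩ P2) = (T1, T2)
        have e1 : T2 ∩ P1 = ∅ := by
          rw [Finset.eq_empty_iff_forall_notMem]
          intro a ha
          obtain ⟨ha2, ha1⟩ := Finset.mem_inter.mp ha
          exact Finset.disjoint_left.mp hdisj ha1 (h2.1 ha2)
        have e2 : T1 ∩ P2 = ∅ := by
          rw [Finset.eq_empty_iff_forall_notMem]
          intro a ha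
          obtain ⟨ha1, ha2⟩ := Finset.mem_inter.mp ha
          exact Finset.disjoint_left.mp hdisj (h1.1 ha1) ha2
        have : (T1 ∪ T2) ∩ P1 = T1 := by
          rw [Finset.union_inter_distrib_right, e1, Finset.union_empty]
          exact Finset.inter_eq_left.mpr h1.1
        have h4 : (T1 ∪ T2) ∩ P2 = T2 := by
          rw [Finset.union_inter_distrib_right, e2, Finset.empty_union]
          exact Finset.inter_eq_left.mpr h2.1
        rw [Prod.mk.injEq]
        exact ⟨this, h4⟩
      · intro T hT
        rw [Finset.mem_filter, Finset.mem_powerset] at hT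
        have hd : Disjoint (T ∩ P1) (T ∩ P2) :=
          Finset.disjoint_of_subset_left Finset.inter_subset_right
            (Finset.disjoint_of_subset_right Finset.inter_subset_right hdisj)
        have hTeq : T = T ∩ P1 ∪ T ∩ P2 := by
          rw [← Finset.inter_union_distrib_left, hP1, hP2, Finset.filter_union_filter_not_eq]
          exact (Finset.inter_eq_left.mpr hT.1).symm
        rw [← Finset.card_union_of_disjoint hd, ← hTeq]
    rw [hbij]
    rw [Finset.sum_product]
    have hfact : ∀ T1 : Finset α, ∑ T2 ∈ P2.powerset.filter (fun T => T.image φ = S''),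
        (-1 : ℤ) ^ (T1.card + T2.card) = (-1 : ℤ) ^ T1.card * (-1) ^ S''.card := by
      intro T1
      rw [← ih P2 ?_ ?_]
      · rw [Finset.mul_sum]
        congr 1
        ext T2
        rw [pow_add]
      · intro a ha
        have haP : a ∈ P := (Finset.filter_subset _ _) ha
        have := hmap a haP
        rw [Finset.mem_cons] at this
        rcases this with h | h
        · exact absurd h (Finset.mem_filter.mp ha).2
        · exact h
      · intro g hg
        obtain ⟨a, haP, hga⟩ := hsurj g (Finset.mem_cons_of_mem hg)
        refine ⟨a, Finset.mem_filter.mpr ⟨haP, ?_⟩, hga⟩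
        intro hc
        exact hf (hc ▸ hga ▸ hg)
    rw [Finset.sum_congr rfl (fun T1 _ => hfact T1)]
    rw [← Finset.sum_mul]
    have hsum1 : (∑ T1 ∈ P1.powerset.filter (fun T => T.Nonempty), (-1 : ℤ) ^ T1.card)
        = -1 := by
      have hP1ne : P1.Nonempty := by
        obtain ⟨a, haP, hfa⟩ := hsurj f (Finset.mem_cons_self f S'')
        exact ⟨a, Finset.mem_filter.mpr ⟨haP, hfa⟩⟩
      have h0 : (∑ T1 ∈ P1.powerset, (-1 : ℤ) ^ T1.card) = 0 := by
        rw [Finset.sum_powerset_neg_one_pow_card]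
        simp [Finset.nonempty_iff_ne_empty.mp hP1ne]
      have hsplit : P1.powerset = insert ∅ (P1.powerset.filter (fun T => T.Nonempty)) := by
        ext T
        simp only [Finset.mem_insert, Finset.mem_filter, Finset.mem_powerset]
        constructor
        · intro h
          rcases Finset.eq_empty_or_nonempty T with h' | h'
          · exact Or.inl h'
          · exact Or.inr ⟨h, h'⟩
        · rintro (h | h)
          · exact h ▸ Finset.empty_subset _
          · exact h.1
      rw [hsplit, Finset.sum_insert (by simp)] at h0
      simp only [Finset.card_empty, pow_zero] at h0
      linarith
    rw [hsum1, Finset.card_cons]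
    ring

end SumLemmas

end St18


namespace St18

open SimpleGraph

section RHS

variable {V : Type*} [Fintype V] [DecidableEq V]

/-- The sign `(-1)^k` for `k : ℤ`. -/
def sgn (k : ℤ) : ℤ := (((-1 : ℤˣ) ^ k : ℤˣ) : ℤ)

lemma sgn_add (a b : ℤ) : sgn (a + b) = sgn a * sgn b := by
  rw [sgn, sgn, sgn, zpow_add]
  exact Units.val_mul _ _

lemma sgn_natCast (n : ℕ) : sgn (n : ℤ) = (-1 : ℤ) ^ n := by
  rw [sgn, zpow_natCast]
  simp

lemma del_edgeFinset (G : SimpleGraph V) [DecidableRel G.Adj] (e : Sym2 V) :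
    ∀ [inst : Fintype ((G.deleteEdges {e}).edgeSet)],
    @SimpleGraph.edgeFinset _ (G.deleteEdges {e}) inst = G.edgeFinset.erase e := by
  intro inst
  ext f
  rw [mem_edgeFinset, Finset.mem_erase, mem_edgeFinset, edgeSet_deleteEdges]
  simp [and_comm]

open Classical in
lemma del_sum (G : SimpleGraph V) [DecidableRel G.Adj] {v0 u : V} (hadj : G.Adj v0 u)
    (f : Finset (Sym2 V) → ℤ) :
    ∑ S ∈ (G.edgeFinset.powerset.filter
        (fun S : Finset (Sym2 V) => (SimpleGraph.fromEdgeSet (↑S : Set (Sym2 V))).Connected)).filter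
        (fun S => s(v0, u) ∉ S), f S
      = ∑ S ∈ (G.deleteEdges {s(v0, u)}).edgeFinset.powerset.filter
          (fun S : Finset (Sym2 V) => (SimpleGraph.fromEdgeSet (↑S : Set (Sym2 V))).Connected), f S := by
  apply Finset.sum_congr _ (fun _ _ => rfl)
  ext S
  rw [Finset.mem_filter, Finset.mem_filter, Finset.mem_powerset, Finset.mem_filter,
    Finset.mem_powerset, del_edgeFinset G s(v0, u)]
  constructor
  · rintro ⟨⟨hsub, hconn⟩, hnot⟩
    refine ⟨fun x hx => Finset.mem_erase.mpr ⟨fun hc => hnot (hc ▸ hx), hsub hx⟩, hconn⟩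
  · rintro ⟨hsub, hconn⟩
    refine ⟨⟨fun x hx => (Finset.mem_erase.mp (hsub hx)).2, hconn⟩,
      fun hc => (Finset.mem_erase.mp (hsub hc)).1 rfl⟩

lemma phi_mem_edgeSet {G : SimpleGraph V} {v0 u : V} (hvu : v0 ≠ u) {f : Sym2 V}
    (hf : f ∈ G.edgeSet) (hne : f ≠ s(v0, u)) :
    Sym2.map (cproj hvu) f ∈ (cGraph G hvu).edgeSet := by
  induction f with
  | _ a b =>
    rw [Sym2.map_pair_eq, SimpleGraph.mem_edgeSet]
    exact cGraph_adj hvu ((SimpleGraph.mem_edgeSet _).mp hf) hne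

lemma cGraph_edgeSet_elim {G : SimpleGraph V} {v0 u : V} (hvu : v0 ≠ u) {f' : Sym2 {x : V // x ≠ u}}
    (hf' : f' ∈ (cGraph G hvu).edgeSet) :
    ∃ f, f ∈ G.edgeSet ∧ f ≠ s(v0, u) ∧ Sym2.map (cproj hvu) f = f' := by
  induction f' with
  | _ a' b' =>
    obtain ⟨a, b, ha, hb, hA, hne⟩ := cGraph_adj_elim hvu ((SimpleGraph.mem_edgeSet _).mp hf')
    exact ⟨s(a, b), (SimpleGraph.mem_edgeSet _).mpr hA, hne, by rw [Sym2.map_pair_eq, ha, hb]⟩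

open Classical in
lemma con_sum (G : SimpleGraph V) [DecidableRel G.Adj] {v0 u : V} (hadj : G.Adj v0 u)
    (hG : G.Connected) :
    ∑ S ∈ (G.edgeFinset.powerset.filter
        (fun S : Finset (Sym2 V) => (SimpleGraph.fromEdgeSet (↑S : Set (Sym2 V))).Connected)).filter
        (fun S => s(v0, u) ∈ S),
        sgn ((S.card : ℤ) + 1 - (Fintype.card V : ℤ))
      = ∑ S' ∈ (cGraph G hadj.ne).edgeFinset.powerset.filter
          (fun S' : Finset (Sym2 {x : V // x ≠ u}) =>
            (SimpleGraph.fromEdgeSet (↑S' : Set (Sym2 {x : V // x ≠ u}))).Connected),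
        sgn ((S'.card : ℤ) + 1 - ((Fintype.card V : ℤ) - 1)) := by
  set e := s(v0, u) with he
  set φ : Sym2 V → Sym2 {x : V // x ≠ u} := Sym2.map (cproj hadj.ne) with hφ
  set N := (Fintype.card V : ℤ) with hN
  set D := (G.edgeFinset.powerset.filter
      (fun S : Finset (Sym2 V) => (SimpleGraph.fromEdgeSet (↑S : Set (Sym2 V))).Connected)).filter
      (fun S => e ∈ S) with hD
  set F' := (cGraph G hadj.ne).edgeFinset.powerset.filter
      (fun S' : Finset (Sym2 {x : V // x ≠ u}) =>
        (SimpleGraph.fromEdgeSet (↑S' : Set (Sym2 {x : V // x ≠ u}))).Connected) with hF'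
  have hDmem : ∀ {S}, S ∈ D ↔ (S ⊆ G.edgeFinset ∧
      (SimpleGraph.fromEdgeSet (↑S : Set (Sym2 V))).Connected) ∧ e ∈ S := by
    intro S
    rw [hD, Finset.mem_filter, Finset.mem_filter, Finset.mem_powerset]
  have hF'mem : ∀ {S'}, S' ∈ F' ↔ S' ⊆ (cGraph G hadj.ne).edgeFinset ∧
      (SimpleGraph.fromEdgeSet (↑S' : Set (Sym2 {x : V // x ≠ u}))).Connected := by
    intro S'
    rw [hF', Finset.mem_filter, Finset.mem_powerset]
  have hcoe : ∀ (S : Finset (Sym2 V)), ((S.erase e : Finset (Sym2 V)) : Set (Sym2 V))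
      = (↑S : Set (Sym2 V)) \ {e} := by
    intro S
    rw [Finset.coe_erase]
  have hmaps : ∀ S ∈ D, (S.erase e).image φ ∈ F' := by
    intro S hS
    obtain ⟨⟨hsub, hconn⟩, heS⟩ := hDmem.mp hS
    refine hF'mem.mpr ⟨?_, ?_⟩
    · intro g hg
      obtain ⟨f, hf, hfg⟩ := Finset.mem_image.mp hg
      rw [Finset.mem_erase] at hf
      rw [mem_edgeFinset]
      exact hfg ▸ phi_mem_edgeSet hadj.ne (mem_edgeFinset.mp (hsub hf.2)) hf.1
    · have : ((S.erase e).image φ : Set (Sym2 {x : V // x ≠ u}))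
          = φ '' ((↑S : Set (Sym2 V)) \ {e}) := by
        rw [Finset.coe_image, hcoe]
      rw [this]
      exact fromEdgeSet_conn_proj hadj.ne
        (fun f hf => mem_edgeFinset.mp (hsub hf)) hconn
  rw [← Finset.sum_fiberwise_of_maps_to hmaps]
  apply Finset.sum_congr rfl
  intro S' hS'
  obtain ⟨hS'sub, hS'conn⟩ := hF'mem.mp hS'
  set P := (G.edgeFinset.erase e).filter (fun f => φ f ∈ S') with hP
  -- reindex the fiber by subsets of `P`
  have hfiber : ∑ S ∈ D.filter (fun S => (S.erase e).image φ = S'),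
      sgn ((S.card : ℤ) + 1 - N)
      = ∑ T ∈ P.powerset.filter (fun T => T.image φ = S'),
        sgn ((T.card : ℤ) + (2 - N)) := by
    refine Finset.sum_nbij' (fun S => S.erase e) (fun T => insert e T) ?_ ?_ ?_ ?_ ?_
    · intro S hS
      rw [Finset.mem_filter] at hS
      obtain ⟨hSD, hSim⟩ := hS
      obtain ⟨⟨hsub, _⟩, heS⟩ := hDmem.mp hSD
      rw [Finset.mem_filter, Finset.mem_powerset]
      refine ⟨?_, hSim⟩
      intro x hx
      rw [Finset.mem_erase] at hx
      rw [hP, Finset.mem_filter, Finset.mem_erase]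
      refine ⟨⟨hx.1, hsub hx.2⟩, ?_⟩
      rw [← hSim]
      exact Finset.mem_image_of_mem φ (Finset.mem_erase.mpr hx)
    · intro T hT
      rw [Finset.mem_filter, Finset.mem_powerset] at hT
      obtain ⟨hTP, hTim⟩ := hT
      have hTE : T ⊆ G.edgeFinset.erase e := fun x hx => (Finset.mem_filter.mp (hTP hx)).1
      have heT : e ∉ T := fun hc => (Finset.mem_erase.mp (hTE hc)).1 rfl
      rw [Finset.mem_filter]
      constructor
      · refine hDmem.mpr ⟨⟨?_, ?_⟩, Finset.mem_insert_self e T⟩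
        · intro x hx
          rcases Finset.mem_insert.mp hx with h | h
          · exact h ▸ mem_edgeFinset.mpr ((SimpleGraph.mem_edgeSet _).mpr hadj)
          · exact (Finset.mem_erase.mp (hTE h)).2
        · refine fromEdgeSet_conn_lift (G := G) hadj.ne ?_ ?_ ?_
          · intro f hf
            rcases Finset.mem_coe.mp hf with h
            rcases Finset.mem_insert.mp h with h | h
            · exact h ▸ (SimpleGraph.mem_edgeSet _).mpr hadj
            · exact mem_edgeFinset.mp ((Finset.mem_erase.mp (hTE h)).2)
          · exact Finset.mem_coe.mpr (Finset.mem_insert_self e T)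
          · have : ((insert e T : Finset (Sym2 V)) : Set (Sym2 V)) \ {e} = ↑T := by
              rw [Finset.coe_insert]
              rw [Set.insert_diff_self_of_notMem (fun hc => heT (Finset.mem_coe.mp hc))]
            rw [this, ← Finset.coe_image, hTim]
            exact hS'conn
      · rw [Finset.erase_insert heT]
        exact hTim
    · intro S hS
      rw [Finset.mem_filter] at hS
      exact Finset.insert_erase (hDmem.mp hS.1).2
    · intro T hT
      rw [Finset.mem_filter, Finset.mem_powerset] at hT
      have hTE : T ⊆ G.edgeFinset.erase e := fun x hx => (Finset.mem_filter.mp (hT.1 hx)).1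
      have heT : e ∉ T := fun hc => (Finset.mem_erase.mp (hTE hc)).1 rfl
      exact Finset.erase_insert heT
    · intro S hS
      rw [Finset.mem_filter] at hS
      have heS : e ∈ S := (hDmem.mp hS.1).2
      have hcard : S.card = (S.erase e).card + 1 := by
        rw [Finset.card_erase_of_mem heS]
        have : 1 ≤ S.card := Finset.card_pos.mpr ⟨e, heS⟩
        omega
      rw [hcard]
      congr 1
      push_cast
      ring
  rw [hfiber]
  have hkey : ∑ T ∈ P.powerset.filter (fun T => T.image φ = S'),
      sgn ((T.card : ℤ) + (2 - N)) = ((-1 : ℤ) ^ S'.card) * sgn (2 - N) := by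
    rw [← key_sum φ S' P ?_ ?_]
    · rw [Finset.sum_mul]
      apply Finset.sum_congr rfl
      intro T _
      rw [sgn_add, sgn_natCast]
    · intro a ha
      exact (Finset.mem_filter.mp ha).2
    · intro f' hf'
      have : f' ∈ (cGraph G hadj.ne).edgeSet := mem_edgeFinset.mp (hS'sub hf')
      obtain ⟨f, hf1, hf2, hf3⟩ := cGraph_edgeSet_elim hadj.ne this
      refine ⟨f, ?_, hf3⟩
      rw [hP, Finset.mem_filter, Finset.mem_erase]
      refine ⟨⟨hf2, mem_edgeFinset.mpr hf1⟩, ?_⟩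
      show φ f ∈ S'
      rw [hφ, hf3]
      exact hf'
  rw [hkey, ← sgn_natCast, ← sgn_add]
  congr 1
  ring

end RHS

end St18


namespace St18

open SimpleGraph Relation

section Final

open Classical in
lemma base_case {V : Type*} [Fintype V] [DecidableEq V] (G : SimpleGraph V)
    [DecidableRel G.Adj] (hE : G.edgeFinset = ∅) (hG : G.Connected) (v0 : V) :
    ((ASet G v0).ncard : ℤ) = ∑ S ∈ G.edgeFinset.powerset.filter
        (fun S : Finset (Sym2 V) => (SimpleGraph.fromEdgeSet (↑S : Set (Sym2 V))).Connected),
      ((((-1 : ℤˣ) ^ ((S.card : ℤ) + 1 - (Fintype.card V : ℤ)) : ℤˣ)) : ℤ) := by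
  have hnoadj : ∀ a b : V, ¬ G.Adj a b := by
    intro a b h
    have : s(a, b) ∈ G.edgeFinset := mem_edgeFinset.mpr ((SimpleGraph.mem_edgeSet _).mpr h)
    rw [hE] at this
    exact absurd this (Finset.notMem_empty _)
  have hsub : Subsingleton V := by
    constructor
    intro a b
    have := (reachable_iff_reflTransGen a b).mp (hG.preconnected a b)
    rcases this.cases_head with h | ⟨c, hc, _⟩
    · exact h
    · exact absurd hc (hnoadj a c)
  have hcard : Fintype.card V = 1 := by
    have h1 : Fintype.card V ≤ 1 := Fintype.card_le_one_iff_subsingleton.mpr hsub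
    have h2 : 0 < Fintype.card V := Fintype.card_pos_iff.mpr hG.nonempty
    omega
  -- the left-hand side is 1
  have hunique : Unique (GraphOrientation G) := by
    refine ⟨⟨⟨fun _ _ => False, fun a b h => h.elim, fun a b h => absurd h (hnoadj a b)⟩⟩, ?_⟩
    intro O
    apply orient_ext
    intro a b
    constructor
    · intro h; exact absurd (O.adj_of_dir a b h) (hnoadj a b)
    · intro h; exact h.elim
  have hAuniv : ASet G v0 = Set.univ := by
    ext O
    simp only [Set.mem_univ, iff_true, ASet, Set.mem_setOf_eq]
    constructor
    · intro v
      have : v0 = v := Subsingleton.elim v0 v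
      exact this ▸ ReflTransGen.refl
    · intro x hx
      rcases TransGen.head'_iff.mp hx with ⟨c, hc, _⟩
      exact absurd (O.adj_of_dir x c hc) (hnoadj x c)
  have hL : (ASet G v0).ncard = 1 := by
    rw [hAuniv, Set.ncard_univ]
    exact Nat.card_eq_one_iff_unique.mpr ⟨hunique.instSubsingleton, ⟨hunique.default⟩⟩
  -- the right-hand side is 1
  have hfromempty : (SimpleGraph.fromEdgeSet ((↑(∅ : Finset (Sym2 V))) : Set (Sym2 V))).Connected := by
    rw [connected_iff_exists_forall_reachable]
    refine ⟨v0, fun w => ?_⟩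
    have : v0 = w := Subsingleton.elim v0 w
    exact this ▸ Reachable.refl v0
  rw [hL, hE]
  rw [Finset.powerset_empty, Finset.filter_singleton]
  rw [if_pos hfromempty]
  rw [Finset.sum_singleton, Finset.card_empty, hcard]
  norm_num

open Classical in
lemma main18 : ∀ (n : ℕ) {V : Type u} [Fintype V] [DecidableEq V] (G : SimpleGraph V)
    [DecidableRel G.Adj], G.edgeFinset.card ≤ n → G.Connected → ∀ v0 : V,
    ((ASet G v0).ncard : ℤ) = ∑ S ∈ G.edgeFinset.powerset.filter
        (fun S : Finset (Sym2 V) => (SimpleGraph.fromEdgeSet (↑S : Set (Sym2 V))).Connected),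
      ((((-1 : ℤˣ) ^ ((S.card : ℤ) + 1 - (Fintype.card V : ℤ)) : ℤˣ)) : ℤ) := by
  intro n
  induction n with
  | zero =>
    intro V _ _ G _ hcard hG v0
    exact base_case G (Finset.card_eq_zero.mp (Nat.le_zero.mp hcard)) hG v0
  | succ n ih =>
    intro V _ _ G _ hcard hG v0
    by_cases hE : G.edgeFinset = ∅
    · exact base_case G hE hG v0
    -- find a neighbour u of v0
    obtain ⟨u, hadj⟩ : ∃ u, G.Adj v0 u := by
      obtain ⟨f, hf⟩ := Finset.nonempty_iff_ne_empty.mpr hE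
      have hex : ∃ w : V, w ≠ v0 := by
        by_contra hc
        push_neg at hc
        induction f with
        | _ a b =>
          have : G.Adj a b := (SimpleGraph.mem_edgeSet _).mp (mem_edgeFinset.mp hf)
          exact this.ne ((hc a).trans (hc b).symm)
      obtain ⟨w, hw⟩ := hex
      have := (reachable_iff_reflTransGen v0 w).mp (hG.preconnected v0 w)
      rcases this.cases_head with h | ⟨c, hc, _⟩
      · exact absurd h.symm hw
      · exact ⟨c, hc⟩
    have hvu : v0 ≠ u := hadj.ne
    have heE : s(v0, u) ∈ G.edgeFinset := mem_edgeFinset.mpr ((SimpleGraph.mem_edgeSet _).mpr hadj)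
    have hcardE : 1 ≤ G.edgeFinset.card := Finset.card_pos.mpr ⟨_, heE⟩
    -- split the left-hand side
    have hsplit := ncard_ASet_split hadj
    -- split the right-hand side
    rw [← Finset.sum_filter_add_sum_filter_not (G.edgeFinset.powerset.filter
      (fun S : Finset (Sym2 V) => (SimpleGraph.fromEdgeSet (↑S : Set (Sym2 V))).Connected))
      (fun S => s(v0, u) ∈ S)]
    -- the contraction part
    have hconpart : ∑ S ∈ (G.edgeFinset.powerset.filter
        (fun S : Finset (Sym2 V) => (SimpleGraph.fromEdgeSet (↑S : Set (Sym2 V))).Connected)).filter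
        (fun S => s(v0, u) ∈ S),
        ((((-1 : ℤˣ) ^ ((S.card : ℤ) + 1 - (Fintype.card V : ℤ)) : ℤˣ)) : ℤ)
        = ((ASet (cGraph G hvu) ⟨v0, hvu⟩).ncard : ℤ) := by
      have h1 := con_sum G hadj hG
      have hcardV' : (Fintype.card {x : V // x ≠ u} : ℤ) = (Fintype.card V : ℤ) - 1 := by
        have h2 : Fintype.card {x : V // x ≠ u} = Fintype.card V - 1 := by
          rw [Fintype.card_subtype_compl, Fintype.card_subtype_eq]
        have h3 : 1 ≤ Fintype.card V := Fintype.card_pos_iff.mpr ⟨v0⟩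
        rw [h2]
        push_cast [h3]
        ring
      have hcard' : (cGraph G hvu).edgeFinset.card ≤ n := by
        have hsub' : (cGraph G hvu).edgeFinset ⊆
            (G.edgeFinset.erase s(v0, u)).image (Sym2.map (cproj hvu)) := by
          intro f' hf'
          obtain ⟨f, hf1, hf2, hf3⟩ := cGraph_edgeSet_elim hvu (mem_edgeFinset.mp hf')
          exact Finset.mem_image.mpr ⟨f, Finset.mem_erase.mpr ⟨hf2, mem_edgeFinset.mpr hf1⟩, hf3⟩
        calc (cGraph G hvu).edgeFinset.card
            ≤ ((G.edgeFinset.erase s(v0, u)).image (Sym2.map (cproj hvu))).card :=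
              Finset.card_le_card hsub'
          _ ≤ (G.edgeFinset.erase s(v0, u)).card := Finset.card_image_le
          _ = G.edgeFinset.card - 1 := Finset.card_erase_of_mem heE
          _ ≤ n := by omega
      have h2 := ih (cGraph G hvu) hcard' (cGraph_connected hvu hG) ⟨v0, hvu⟩
      simp only [sgn] at h1
      rw [h1, h2]
      apply Finset.sum_congr rfl
      intro S' _
      rw [hcardV']
    rw [hconpart]
    -- the deletion part
    have hdelpart : ∑ S ∈ (G.edgeFinset.powerset.filter
        (fun S : Finset (Sym2 V) => (SimpleGraph.fromEdgeSet (↑S : Set (Sym2 V))).Connected)).filter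
        (fun S => s(v0, u) ∉ S),
        ((((-1 : ℤˣ) ^ ((S.card : ℤ) + 1 - (Fintype.card V : ℤ)) : ℤˣ)) : ℤ)
        = ((ASet (G.deleteEdges {s(v0, u)}) v0).ncard : ℤ) := by
      rw [del_sum G hadj]
      by_cases hconn : (G.deleteEdges {s(v0, u)}).Connected
      · have hcard' : (G.deleteEdges {s(v0, u)}).edgeFinset.card ≤ n := by
          rw [del_edgeFinset G s(v0, u), Finset.card_erase_of_mem heE]
          omega
        exact (ih (G.deleteEdges {s(v0, u)}) hcard' hconn v0).symm
      · -- both sides are zero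
        have hempty : ((G.deleteEdges {s(v0, u)}).edgeFinset.powerset.filter
            (fun S : Finset (Sym2 V) =>
              (SimpleGraph.fromEdgeSet (↑S : Set (Sym2 V))).Connected)) = ∅ := by
          rw [Finset.eq_empty_iff_forall_notMem]
          intro S hS
          rw [Finset.mem_filter, Finset.mem_powerset] at hS
          apply hconn
          refine hS.2.mono ?_
          intro x y hxy
          rw [fromEdgeSet_adj] at hxy
          exact mem_edgeFinset.mp (hS.1 hxy.1)
        have hAempty : ASet (G.deleteEdges {s(v0, u)}) v0 = ∅ := by
          rw [Set.eq_empty_iff_forall_notMem]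
          intro O hO
          exact hconn (conn_of_ASet_mem hO)
        rw [hempty, hAempty]
        simp
    rw [hdelpart]
    rw [hsplit]
    push_cast
    ring

end Final

end St18

open Classical in
theorem statement18 {V : Type*} [Fintype V] [DecidableEq V] (G : SimpleGraph V)
    [DecidableRel G.Adj] (hG : G.Connected) (v0 : V) :
    ({O : GraphOrientation G | O.IsConnectedFrom v0 ∧
        ¬ ∃ C : Set (Sym2 V), O.IsDirCycle C}.ncard : ℤ) =
      ∑ S ∈ G.edgeFinset.powerset.filter
          (fun S : Finset (Sym2 V) => (SimpleGraph.fromEdgeSet (↑S : Set (Sym2 V))).Connected),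
        ((((-1 : ℤˣ) ^ ((S.card : ℤ) + 1 - (Fintype.card V : ℤ)) : ℤˣ)) : ℤ) := by
  rw [St18.ASet_eq G v0]
  exact St18.main18 G.edgeFinset.card G le_rfl hG v0
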